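/- Vertex reduction yields a surjective spline homomorphism: let G be an edge-labeled graph over ℤ, v_i a vertex, and G_red the reduced graph associated to v_i (remove v_i and its incident edges labeled r_t to neighbors v_{i_t}; relabel each neighbor's vertex module as lcm(m_{v_{i_t}}, gcd(m_{v_i}, r_t))·ℤ; add between each pair of neighbors v_{i_t}, v_{i_u} a new edge labeled gcd(r_t, r_u), then merge multiple edges via lcm). Then the coordinate-deletion map ψ : R̂_G → R̂_{G_red} is a well-defined surjective ℤ-module homomorphism. -/

import Mathlib

theorem aux_nat_distrib (a b c : ℕ) :
    Nat.gcd (Nat.lcm a b) c ∣ Nat.lcm (Nat.gcd a c) (Nat.gcd b c) := by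
  rcases eq_or_ne a 0 with rfl | ha
  · rw [Nat.lcm_zero_left, Nat.gcd_zero_left]
    exact Nat.dvd_lcm_left _ _
  rcases eq_or_ne b 0 with rfl | hb
  · rw [Nat.lcm_zero_right, Nat.gcd_zero_left]
    exact Nat.dvd_lcm_right _ _
  rcases eq_or_ne c 0 with rfl | hc
  · simp
  have h1 : Nat.lcm a b ≠ 0 := Nat.lcm_ne_zero ha hb
  have h2 : Nat.gcd (Nat.lcm a b) c ≠ 0 := Nat.gcd_ne_zero_right hc
  have h3 : Nat.gcd a c ≠ 0 := Nat.gcd_ne_zero_right hc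
  have h4 : Nat.gcd b c ≠ 0 := Nat.gcd_ne_zero_right hc
  have h5 : Nat.lcm (Nat.gcd a c) (Nat.gcd b c) ≠ 0 := Nat.lcm_ne_zero h3 h4
  rw [← Nat.factorization_le_iff_dvd h2 h5, Nat.factorization_gcd h1 hc,
    Nat.factorization_lcm ha hb, Nat.factorization_lcm h3 h4,
    Nat.factorization_gcd ha hc, Nat.factorization_gcd hb hc]
  intro p
  simp only [Finsupp.inf_apply, Finsupp.sup_apply]
  omega

theorem aux_int_distrib (a b c : ℤ) :
    gcd (lcm a b) c ∣ lcm (gcd a c) (gcd b c) := by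
  rw [← Int.coe_gcd, ← Int.coe_lcm, ← Int.coe_gcd, ← Int.coe_gcd, ← Int.coe_lcm,
    Int.natCast_dvd_natCast]
  simpa [Int.gcd, Int.lcm] using aux_nat_distrib a.natAbs b.natAbs c.natAbs

theorem aux_crt2 (n m a b : ℤ) (h : gcd n m ∣ a - b) :
    ∃ x : ℤ, n ∣ x - a ∧ m ∣ x - b := by
  obtain ⟨q, hq⟩ := h
  rw [← Int.coe_gcd, Int.gcd_eq_gcd_ab n m] at hq
  refine ⟨a - q * (n * Int.gcdA n m), ⟨-(q * Int.gcdA n m), by ring⟩,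
    ⟨q * Int.gcdB n m, by linarith [hq]⟩⟩

theorem aux_gcd_finset_lcm {ι : Type*} (s : Finset ι) (n : ι → ℤ) (c z : ℤ)
    (h : ∀ i ∈ s, gcd (n i) c ∣ z) : gcd (s.lcm n) c ∣ z := by
  classical
  induction s using Finset.induction_on with
  | empty => simpa using (gcd_dvd_left (1 : ℤ) c).trans (one_dvd z)
  | insert j s hj ih =>
    rw [Finset.lcm_insert]
    refine (aux_int_distrib (n j) (s.lcm n) c).trans (lcm_dvd ?_ ?_)
    · exact h j (Finset.mem_insert_self j s)
    · exact ih fun i hi => h i (Finset.mem_insert_of_mem hi)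

theorem aux_crt {ι : Type*} (s : Finset ι) (n a : ι → ℤ)
    (h : ∀ i ∈ s, ∀ j ∈ s, gcd (n i) (n j) ∣ a i - a j) :
    ∃ x : ℤ, ∀ i ∈ s, n i ∣ x - a i := by
  classical
  induction s using Finset.induction_on with
  | empty => exact ⟨0, by simp⟩
  | insert j s hj ih =>
    obtain ⟨x, hx⟩ := ih fun i hi k hk =>
      h i (Finset.mem_insert_of_mem hi) k (Finset.mem_insert_of_mem hk)
    have hcomp : gcd (s.lcm n) (n j) ∣ x - a j := by
      apply aux_gcd_finset_lcm
      intro i hi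
      have h1 : gcd (n i) (n j) ∣ x - a i := (gcd_dvd_left _ _).trans (hx i hi)
      have h2 : gcd (n i) (n j) ∣ a i - a j :=
        h i (Finset.mem_insert_of_mem hi) j (Finset.mem_insert_self j s)
      simpa using dvd_add h1 h2
    obtain ⟨y, hy1, hy2⟩ := aux_crt2 (s.lcm n) (n j) x (a j) hcomp
    refine ⟨y, fun i hi => ?_⟩
    rcases Finset.mem_insert.mp hi with rfl | hi
    · exact hy2
    · have h1 : n i ∣ y - x := (Finset.dvd_lcm hi).trans hy1
      have h2 : n i ∣ x - a i := hx i hi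
      simpa using dvd_add h1 h2

/-- Vertex reduction yields a well-defined surjective map of spline sets: deleting the
coordinate at `v₀`, after relabeling each neighbor `w` by
`lcm(m_w, gcd(m_{v₀}, r_e))` over incident edges and adding edges labeled
`gcd(r_{e₁}, r_{e₂})` between neighbors (with multiple edges merged). -/
theorem stmt_12 {V E : Type*} [Fintype E] [DecidableEq V] [DecidableEq E]
    (u v : E → V) (m : V → ℤ) (r : E → ℤ) (v₀ : V)
    (m' : {w : V // w ≠ v₀} → ℤ)
    (hm' : ∀ w : {w : V // w ≠ v₀}, m' w = lcm (m w.1)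
      ((Finset.univ.filter
        (fun e => (u e = v₀ ∧ v e = w.1) ∨ (v e = v₀ ∧ u e = w.1))).lcm
        (fun e => gcd (m v₀) (r e))))
    (SG : Set (V → ℤ)) (Sred : Set ({w : V // w ≠ v₀} → ℤ))
    (hSG : ∀ f, f ∈ SG ↔ ((∀ w, m w ∣ f w) ∧ ∀ e, r e ∣ f (u e) - f (v e)))
    (hSred : ∀ g, g ∈ Sred ↔ ((∀ w, m' w ∣ g w) ∧
      (∀ e, ∀ (hu : u e ≠ v₀) (hv : v e ≠ v₀), r e ∣ g ⟨u e, hu⟩ - g ⟨v e, hv⟩) ∧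
      (∀ e₁ e₂ (w₁ w₂ : {w : V // w ≠ v₀}),
        ((u e₁ = v₀ ∧ v e₁ = w₁.1) ∨ (v e₁ = v₀ ∧ u e₁ = w₁.1)) →
        ((u e₂ = v₀ ∧ v e₂ = w₂.1) ∨ (v e₂ = v₀ ∧ u e₂ = w₂.1)) →
        gcd (r e₁) (r e₂) ∣ g w₁ - g w₂))) :
    (∀ f ∈ SG, (fun w : {w : V // w ≠ v₀} => f w.1) ∈ Sred) ∧
    (∀ g ∈ Sred, ∃ f ∈ SG, ∀ w : {w : V // w ≠ v₀}, f w.1 = g w) := by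
  constructor
  · -- well-definedness
    intro f hf
    obtain ⟨hf1, hf2⟩ := (hSG f).mp hf
    -- for an edge incident to v₀ with other endpoint w, r e divides f v₀ - f w
    have key : ∀ (e : E) (w : {w : V // w ≠ v₀}),
        ((u e = v₀ ∧ v e = w.1) ∨ (v e = v₀ ∧ u e = w.1)) → r e ∣ f v₀ - f w.1 := by
      intro e w hw
      rcases hw with ⟨h1, h2⟩ | ⟨h1, h2⟩
      · have := hf2 e; rw [h1, h2] at this; exact this
      · have := hf2 e; rw [h1, h2] at this
        simpa using this.neg_right
    rw [hSred]
    refine ⟨?_, ?_, ?_⟩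
    · intro w
      rw [hm' w]
      refine lcm_dvd (hf1 w.1) (Finset.lcm_dvd ?_)
      intro e he
      rw [Finset.mem_filter] at he
      have h1 : gcd (m v₀) (r e) ∣ f v₀ := (gcd_dvd_left _ _).trans (hf1 v₀)
      have h2 : gcd (m v₀) (r e) ∣ f v₀ - f w.1 :=
        (gcd_dvd_right _ _).trans (key e w he.2)
      simpa using dvd_sub h1 h2
    · intro e hu hv
      exact hf2 e
    · intro e₁ e₂ w₁ w₂ h₁ h₂
      have d1 : gcd (r e₁) (r e₂) ∣ f v₀ - f w₁.1 :=
        (gcd_dvd_left _ _).trans (key e₁ w₁ h₁)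
      have d2 : gcd (r e₁) (r e₂) ∣ f v₀ - f w₂.1 :=
        (gcd_dvd_right _ _).trans (key e₂ w₂ h₂)
      simpa using dvd_sub d2 d1
  · -- surjectivity
    intro g hg
    obtain ⟨hg1, hg2, hg3⟩ := (hSred g).mp hg
    -- gcd (m v₀) (r e) divides g w for e incident to v₀ at w
    have key : ∀ (e : E) (w : {w : V // w ≠ v₀}),
        ((u e = v₀ ∧ v e = w.1) ∨ (v e = v₀ ∧ u e = w.1)) → gcd (m v₀) (r e) ∣ g w := by
      intro e w hw
      refine Dvd.dvd.trans ?_ (hg1 w)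
      rw [hm' w]
      have hmem : e ∈ Finset.univ.filter
          (fun e => (u e = v₀ ∧ v e = w.1) ∨ (v e = v₀ ∧ u e = w.1)) :=
        Finset.mem_filter.mpr ⟨Finset.mem_univ _, hw⟩
      exact (Finset.dvd_lcm hmem).trans (dvd_lcm_right _ _)
    -- set up the congruence system
    set n : Option E → ℤ := fun i => i.elim (m v₀) (fun e =>
      if h1 : u e = v₀ then (if h2 : v e = v₀ then 1 else r e)
      else (if h2 : v e = v₀ then r e else 1)) with hn
    set a : Option E → ℤ := fun i => i.elim 0 (fun e =>
      if h1 : u e = v₀ then (if h2 : v e = v₀ then 0 else g ⟨v e, h2⟩)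
      else (if h2 : v e = v₀ then g ⟨u e, h1⟩ else 0)) with ha
    have horient : ∀ e : E, ∀ (h1 : u e = v₀) (h2 : v e ≠ v₀),
        (u e = v₀ ∧ v e = (⟨v e, h2⟩ : {w : V // w ≠ v₀}).1) ∨
        (v e = v₀ ∧ u e = (⟨v e, h2⟩ : {w : V // w ≠ v₀}).1) := fun e h1 h2 => Or.inl ⟨h1, rfl⟩
    -- pairwise compatibility
    have hcompat : ∀ i ∈ (Finset.univ : Finset (Option E)), ∀ j ∈ Finset.univ,
        gcd (n i) (n j) ∣ a i - a j := by
      -- gcd (m v₀) (n (some e)) ∣ a (some e) for every e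
      have base : ∀ e : E, gcd (m v₀) (n (some e)) ∣ a (some e) := by
        intro e
        by_cases h1 : u e = v₀ <;> by_cases h2 : v e = v₀ <;>
          simp only [hn, ha, Option.elim, dif_pos, dif_neg, h1, h2]
        · simp
        · simpa [h1, h2] using key e ⟨v e, h2⟩ (Or.inl ⟨h1, rfl⟩)
        · simpa [h1, h2] using key e ⟨u e, h1⟩ (Or.inr ⟨h2, rfl⟩)
        · simpa [h1, h2] using (gcd_dvd_right (m v₀) 1).trans (one_dvd _)
      -- gcd (n (some e₁)) (n (some e₂)) ∣ a (some e₁) - a (some e₂)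
      have ss : ∀ e₁ e₂ : E, gcd (n (some e₁)) (n (some e₂)) ∣ a (some e₁) - a (some e₂) := by
        intro e₁ e₂
        by_cases h1 : u e₁ = v₀ <;> by_cases h2 : v e₁ = v₀ <;>
          by_cases h3 : u e₂ = v₀ <;> by_cases h4 : v e₂ = v₀ <;>
          simp only [hn, ha, Option.elim, h1, h2, h3, h4, dite_true, dite_false,
            dif_pos, dif_neg, not_false_iff] <;>
          first
          | (simp [h1, h2, h3, h4])
          | (first
              | exact (gcd_one_left _).dvd.trans (one_dvd _)
              | exact (gcd_one_right _).dvd.trans (one_dvd _)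
              | skip)
        · simpa [h1, h2, h3, h4] using hg3 e₁ e₂ ⟨v e₁, h2⟩ ⟨v e₂, h4⟩
            (Or.inl ⟨h1, rfl⟩) (Or.inl ⟨h3, rfl⟩)
        · simpa [h1, h2, h3, h4] using hg3 e₁ e₂ ⟨v e₁, h2⟩ ⟨u e₂, h3⟩
            (Or.inl ⟨h1, rfl⟩) (Or.inr ⟨h4, rfl⟩)
        · simpa [h1, h2, h3, h4] using hg3 e₁ e₂ ⟨u e₁, h1⟩ ⟨v e₂, h4⟩
            (Or.inr ⟨h2, rfl⟩) (Or.inl ⟨h3, rfl⟩)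
        · simpa [h1, h2, h3, h4] using hg3 e₁ e₂ ⟨u e₁, h1⟩ ⟨u e₂, h3⟩
            (Or.inr ⟨h2, rfl⟩) (Or.inr ⟨h4, rfl⟩)
      rintro (_ | e₁) - (_ | e₂) -
      · simp
      · simpa [hn, ha, Option.elim] using (base e₂).neg_right
      · rw [show a (some e₁) - a none = a (some e₁) by simp [ha, Option.elim], gcd_comm]
        exact base e₁
      · exact ss e₁ e₂
    obtain ⟨x, hx⟩ := aux_crt Finset.univ n a hcompat
    have hx0 : m v₀ ∣ x := by simpa [hn, ha] using hx none (Finset.mem_univ _)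
    -- build f
    refine ⟨fun w => if h : w = v₀ then x else g ⟨w, h⟩, ?_, ?_⟩
    · rw [hSG]
      constructor
      · intro w
        by_cases h : w = v₀
        · subst h; simpa using hx0
        · simp only [dif_neg h]
          refine Dvd.dvd.trans ?_ (hg1 ⟨w, h⟩)
          rw [hm' ⟨w, h⟩]
          exact dvd_lcm_left _ _
      · intro e
        have he := hx (some e) (Finset.mem_univ _)
        by_cases h1 : u e = v₀ <;> by_cases h2 : v e = v₀
        · simp [h1, h2]
        · simp only [hn, ha, Option.elim, dif_pos h1, dif_neg h2] at he
          simpa [h1, h2] using he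
        · simp only [hn, ha, Option.elim, dif_neg h1, dif_pos h2] at he
          have := he.neg_right
          simpa [h1, h2] using this
        · simpa [h1, h2] using hg2 e h1 h2
    · intro w
      simp [w.2]
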